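/- Let α > 1 and b > 1 be reals with b ≠ 2α + 1, and let K > 0. For each integer n ≥ 1, let τ_n > 0 be the unique solution of Σ_{i=1}^∞ 1/(1 + τ_n i^{α}) = n, set ζ_i(n) = τ_n i^{α}/(1 + τ_n i^{α}) and Ω_n = (1/n) Σ_{i=1}^∞ (1 − ζ_i(n))², let the signal coefficients be i^{-b} (so λ_i β_i² = i^{-b} with λ_i = i^{-α}), let σ_n² ≥ 0 be noise levels, let S_n = { i ∈ ℕ, i ≥ 1 : ζ_i(n)² < 1 − Ω_n } be the optimal feature mask, and define the masked surrogate-to-target risk R^{mask}_n = (σ_n² Ω_n + Σ_{i∈S_n} i^{-b} ζ_i(n)²)/(1 − Ω_n) + Σ_{i∉S_n} i^{-b}. Then: (i) if b < 2α + 1 and σ_n² ≤ K n^{-(b−1)} for all n, there exist constants c, C > 0 and N such that c · n^{-(b−1)} ≤ R^{mask}_n ≤ C · n^{-(b−1)} for all n ≥ N; (ii) if b > 2α + 1 and σ_n² ≤ K n^{-2α} for all n, there exist constants c, C > 0 and N such that c · n^{-2α} ≤ R^{mask}_n ≤ C · n^{-2α} for all n ≥ N. -/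

import Mathlib

open Finset

/-- MVT step for the tail: `(s-1) (x+1)^{-s} ≤ x^{1-s} - (x+1)^{1-s}`. -/
lemma mvt_low (s : ℝ) (hs : 1 < s) (x : ℝ) (hx : 1 ≤ x) :
    (s - 1) * (x+1) ^ (-s) ≤ x ^ (1-s) - (x+1) ^ (1-s) := by
  have hx0 : (0:ℝ) < x := by linarith
  obtain ⟨c, hc, hslope⟩ := exists_hasDerivAt_eq_slope (fun y => y ^ (1-s))
      (fun y => (1-s) * y ^ (1-s-1)) (by linarith : x < x + 1)
      (by
        intro y hy
        have hy0 : y ≠ 0 := by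
          have : (1:ℝ) ≤ y := le_trans hx hy.1
          positivity
        exact ((Real.continuousAt_rpow_const y (1-s) (Or.inl hy0)).continuousWithinAt))
      (by
        intro y hy
        have hy0 : y ≠ 0 := by
          have : (1:ℝ) < y := lt_of_le_of_lt hx hy.1
          positivity
        exact Real.hasDerivAt_rpow_const (Or.inl hy0))
  have hc0 : 0 < c := lt_trans hx0 hc.1
  have he : (1-s-1 : ℝ) = -s := by ring
  rw [he] at hslope
  have key : (x+1)^(1-s) - x^(1-s) = (1-s) * c ^ (-s) := by
    have h2 := hslope.symm
    rw [show (x + 1 - x : ℝ) = 1 by ring, div_one] at h2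
    linarith [h2]
  have hmono : (x+1) ^ (-s) ≤ c ^ (-s) :=
    Real.rpow_le_rpow_of_nonpos hc0 (le_of_lt hc.2) (by linarith)
  nlinarith [key, hmono]



/-- MVT step for the head: for `0 < q < 1`, `q x^{q-1} ≤ x^q - (x-1)^q`. -/
lemma mvt_high (q : ℝ) (hq0 : 0 < q) (hq1 : q < 1) (x : ℝ) (hx : 1 ≤ x) :
    q * x ^ (q-1) ≤ x ^ q - (x-1) ^ q := by
  obtain ⟨c, hc, hslope⟩ := exists_hasDerivAt_eq_slope (fun y => y ^ q)
      (fun y => q * y ^ (q-1)) (by linarith : x - 1 < x)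
      (by
        intro y _
        exact ((Real.continuousAt_rpow_const y q (Or.inr (le_of_lt hq0))).continuousWithinAt))
      (by
        intro y hy
        have h1 : (0:ℝ) ≤ x - 1 := by linarith
        have hy0 : y ≠ 0 := by
          have := lt_of_le_of_lt h1 hy.1
          positivity
        exact Real.hasDerivAt_rpow_const (Or.inl hy0))
  have hc0 : 0 < c := by
    have h1 : (0:ℝ) ≤ x - 1 := by linarith
    exact lt_of_le_of_lt h1 hc.1
  have key : x^q - (x-1)^q = q * c ^ (q-1) := by
    have := hslope.symm
    rw [show (x - (x-1) : ℝ) = 1 by ring, div_one] at this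
    linarith [this]
  have hmono : x ^ (q-1) ≤ c ^ (q-1) :=
    Real.rpow_le_rpow_of_nonpos hc0 (le_of_lt hc.2) (by linarith)
  nlinarith [key, hmono]

/-- Tail bound for sums of `k^{-s}` over `Ioc M B`. -/
lemma nat_Ioc_rpow_le (s : ℝ) (hs : 1 < s) (M : ℕ) (hM : 1 ≤ M) (B : ℕ) :
    ∑ k ∈ Finset.Ioc M B, (k:ℝ) ^ (-s) ≤ (M:ℝ)^(1-s)/(s-1) := by
  have hs1 : (0:ℝ) < s - 1 := by linarith
  have main : ∀ B : ℕ, M ≤ B → ∑ k ∈ Finset.Ioc M B, (k:ℝ) ^ (-s)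
      ≤ ((M:ℝ)^(1-s) - (B:ℝ)^(1-s))/(s-1) := by
    intro B
    induction B with
    | zero => intro h; interval_cases M <;> simp at h ⊢
    | succ B ih =>
      intro h
      rcases Nat.lt_or_ge M (B+1) with hlt | hge
      · have hMB : M ≤ B := Nat.lt_succ_iff.mp hlt
        have step := mvt_low s hs (B:ℝ) (by exact_mod_cast le_trans hM hMB)
        have ihb := ih hMB
        rw [Finset.sum_Ioc_succ_top hMB]
        push_cast
        rw [le_div_iff₀ hs1] at ihb ⊢
        nlinarith [step, ihb]
      · have hMeq : M = B + 1 := le_antisymm h hge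
        subst hMeq
        simp
  rcases Nat.lt_or_ge B M with h | h
  · rw [Finset.Ioc_eq_empty_of_le (le_of_lt h)]
    simp only [Finset.sum_empty]
    positivity
  · refine le_trans (main B h) ?_
    have h0 : (0:ℝ) ≤ (B:ℝ)^(1-s) := Real.rpow_nonneg (Nat.cast_nonneg B) _
    gcongr
    linarith

/-- Head bound: for `-1 < s`, `∑_{k=1}^M k^s ≤ (1 + 1/(s+1)) M^{s+1}`. -/
lemma nat_Icc_rpow_le (s : ℝ) (hs : -1 < s) (M : ℕ) :
    ∑ k ∈ Finset.Icc 1 M, (k:ℝ) ^ s ≤ (1 + 1/(s+1)) * (M:ℝ)^(s+1) := by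
  have hs1 : (0:ℝ) < s + 1 := by linarith
  have hM0 : (0:ℝ) ≤ (M:ℝ)^(s+1) := Real.rpow_nonneg (Nat.cast_nonneg M) _
  rcases le_or_gt 0 s with hpos | hneg
  · -- each term ≤ M^s, M terms
    have hle : ∑ k ∈ Finset.Icc 1 M, (k:ℝ) ^ s ≤ ∑ _k ∈ Finset.Icc 1 M, (M:ℝ) ^ s := by
      apply Finset.sum_le_sum
      intro k hk
      have hk2 := (Finset.mem_Icc.mp hk).2
      exact Real.rpow_le_rpow (Nat.cast_nonneg k) (by exact_mod_cast hk2) hpos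
    rcases Nat.eq_zero_or_pos M with hM | hM
    · subst hM
      simp only [Nat.cast_zero, Real.zero_rpow (ne_of_gt hs1), mul_zero]
      simp
    have hMr : (1:ℝ) ≤ (M:ℝ) := by exact_mod_cast hM
    have : ∑ _k ∈ Finset.Icc 1 M, (M:ℝ) ^ s = (M:ℝ) * (M:ℝ)^s := by
      rw [Finset.sum_const, Nat.card_Icc]
      simp [nsmul_eq_mul]
    rw [this] at hle
    have heq : (M:ℝ) * (M:ℝ)^s = (M:ℝ)^(s+1) := by
      rw [Real.rpow_add (by linarith : (0:ℝ) < (M:ℝ)), Real.rpow_one]; ring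
    rw [heq] at hle
    refine hle.trans ?_
    nlinarith [hM0, one_div_pos.mpr hs1]
  · -- telescoping
    have main : ∀ M : ℕ, ∑ k ∈ Finset.Icc 1 M, (k:ℝ) ^ s ≤ (M:ℝ)^(s+1)/(s+1) := by
      intro M
      induction M with
      | zero => simp [Real.zero_rpow (ne_of_gt hs1)]
      | succ M ih =>
        have step := mvt_high (s+1) hs1 (by linarith) ((M:ℝ)+1) (by have := Nat.cast_nonneg (α:=ℝ) M; linarith)
        rw [show Finset.Icc 1 (M+1) = Finset.Ioc 0 (M+1) by rfl,
          Finset.sum_Ioc_succ_top (Nat.zero_le M), show Finset.Ioc 0 M = Finset.Icc 1 M by rfl]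
        push_cast
        rw [le_div_iff₀ hs1] at ih ⊢
        have he : (s + 1 - 1 : ℝ) = s := by ring
        rw [he] at step
        have hsimp : ((M:ℝ) + 1 - 1) = (M:ℝ) := by ring
        rw [hsimp] at step
        nlinarith [step, ih]
    refine (main M).trans ?_
    rw [div_eq_mul_one_div]
    nlinarith [hM0, one_div_pos.mpr hs1]



lemma summable_pnat_rpow {s : ℝ} (hs : 1 < s) :
    Summable (fun i : ℕ+ => ((i:ℕ):ℝ) ^ (-s)) :=
  ((Real.summable_nat_rpow (p := -s)).mpr (by linarith)).comp_injective PNat.coe_injective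

/-- Tail bound for tsums over `ℕ+`. -/
lemma pnat_tail (s : ℝ) (hs : 1 < s) (M : ℕ) (hM : 1 ≤ M) :
    Summable (fun i : ℕ+ => if M < (i:ℕ) then ((i:ℕ):ℝ)^(-s) else 0) ∧
    ∑' i : ℕ+, (if M < (i:ℕ) then ((i:ℕ):ℝ)^(-s) else 0) ≤ (M:ℝ)^(1-s)/(s-1) := by
  have hnn : ∀ i : ℕ+, 0 ≤ (if M < (i:ℕ) then ((i:ℕ):ℝ)^(-s) else 0) := by
    intro i; split
    · positivity
    · exact le_refl 0
  have hsum : Summable (fun i : ℕ+ => if M < (i:ℕ) then ((i:ℕ):ℝ)^(-s) else 0) := by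
    apply Summable.of_nonneg_of_le hnn _ (summable_pnat_rpow hs)
    intro i; split
    · exact le_refl _
    · positivity
  refine ⟨hsum, Summable.tsum_le_of_sum_le hsum ?_⟩
  intro F
  have hinj : ∀ x ∈ F, ∀ y ∈ F, (x:ℕ) = (y:ℕ) → x = y := by
    intro x _ y _ h; exact PNat.coe_injective h
  have himg := Finset.sum_image (s := F) (g := fun i : ℕ+ => (i:ℕ))
    (f := fun k : ℕ => if M < k then (k:ℝ)^(-s) else 0) hinj
  refine le_trans (le_of_eq himg.symm) ?_
  set E := F.image (fun i : ℕ+ => (i:ℕ)) with hE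
  rw [← Finset.sum_filter]
  have hsub : E.filter (fun k => M < k) ⊆ Finset.Ioc M (E.sup id) := by
    intro k hk
    rw [Finset.mem_filter] at hk
    rw [Finset.mem_Ioc]
    exact ⟨hk.2, Finset.le_sup (f := id) hk.1⟩
  refine le_trans (Finset.sum_le_sum_of_subset_of_nonneg hsub ?_) ?_
  · intro k _ _; positivity
  · exact nat_Ioc_rpow_le s hs M hM _

lemma pnat_sum_Icc_eq (g : ℕ → ℝ) (a M : ℕ+) :
    ∑ i ∈ Finset.Icc a M, g (i:ℕ) = ∑ k ∈ Finset.Icc (a:ℕ) (M:ℕ), g k := by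
  rw [← PNat.map_subtype_embedding_Icc]
  exact (Finset.sum_map (Finset.Icc a M) (Function.Embedding.subtype _) g).symm

lemma pnat_cutoff_tsum (g : ℕ → ℝ) (M : ℕ+) :
    Summable (fun i : ℕ+ => if (i:ℕ) ≤ (M:ℕ) then g (i:ℕ) else 0) ∧
    ∑' i : ℕ+, (if (i:ℕ) ≤ (M:ℕ) then g (i:ℕ) else 0) = ∑ k ∈ Finset.Icc 1 (M:ℕ), g k := by
  have hz : ∀ i ∉ Finset.Icc (1:ℕ+) M, (if (i:ℕ) ≤ (M:ℕ) then g (i:ℕ) else 0) = 0 := by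
    intro i hi
    rw [Finset.mem_Icc] at hi
    push_neg at hi
    have h1 : ¬ ((i:ℕ) ≤ (M:ℕ)) := by
      intro hle
      exact absurd ((PNat.coe_le_coe i M).mp hle) (not_le.mpr (hi i.one_le))
    simp [h1]
  refine ⟨summable_of_ne_finset_zero hz, (tsum_eq_sum hz).trans ?_⟩
  rw [show ∑ i ∈ Finset.Icc (1:ℕ+) M, (if (i:ℕ) ≤ (M:ℕ) then g (i:ℕ) else 0)
      = ∑ i ∈ Finset.Icc (1:ℕ+) M, g (i:ℕ) from Finset.sum_congr rfl (by
        intro i hi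
        rw [Finset.mem_Icc] at hi
        have : (i:ℕ) ≤ (M:ℕ) := (PNat.coe_le_coe i M).mpr hi.2
        simp [this])]
  exact pnat_sum_Icc_eq g 1 M





lemma pnat_one_le (i : ℕ+) : (1:ℝ) ≤ (i:ℝ) := by exact_mod_cast i.one_le

lemma pnat_rpow_pos (α : ℝ) (i : ℕ+) : (0:ℝ) < (i:ℝ)^α :=
  Real.rpow_pos_of_pos (lt_of_lt_of_le one_pos (pnat_one_le i)) α

lemma rpow_neg_inv_pow {α t : ℝ} (ht : 0 < t) (hα0 : α ≠ 0) : (t^(-α⁻¹))^α = t⁻¹ := by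
  rw [← Real.rpow_mul (le_of_lt ht)]
  rw [show (-α⁻¹*α : ℝ) = -1 by field_simp]
  exact Real.rpow_neg_one t

section tfacts
variable {α t : ℝ} (hα : 1 < α) (ht : 0 < t)

include hα ht in
lemma summable_inv_one_add : Summable (fun i : ℕ+ => 1/(1+t*(i:ℝ)^α)) := by
  have hle : ∀ i : ℕ+, 1/(1+t*(i:ℝ)^α) ≤ t⁻¹ * ((i:ℕ):ℝ)^(-α) := by
    intro i
    have hip := pnat_rpow_pos α i
    rw [Real.rpow_neg (le_of_lt (lt_of_lt_of_le one_pos (pnat_one_le i)))]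
    rw [one_div, mul_comm]
    rw [show ((i:ℕ):ℝ) = (i:ℝ) from rfl]
    rw [← mul_inv]
    apply inv_anti₀ (by positivity)
    linarith
  exact Summable.of_nonneg_of_le (fun i => by positivity) hle
    ((summable_pnat_rpow hα).mul_left t⁻¹)

include hα ht in
/-- Lower bound on `t`: `(3n)^{-α} ≤ t`. -/
lemma t_lower (n : ℕ) (hn : 1 ≤ n)
    (heq : ∑' i : ℕ+, 1 / (1 + t * (i : ℝ) ^ α) = (n : ℝ)) :
    t ^ (-α⁻¹) ≤ 3 * n := by
  set r := t ^ (-α⁻¹) with hrdef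
  have hr0 : 0 < r := Real.rpow_pos_of_pos ht _
  have hn1 : (1:ℝ) ≤ (n:ℝ) := by exact_mod_cast hn
  rcases lt_or_ge r 1 with h | h
  · linarith
  · -- M := ⌊r⌋₊ ≥ 1
    set M := ⌊r⌋₊ with hMdef
    have hM1 : 1 ≤ M := Nat.le_floor (by exact_mod_cast h)
    have hMr : (M:ℝ) ≤ r := Nat.floor_le (le_of_lt hr0)
    set M' : ℕ+ := ⟨M, hM1⟩ with hM'def
    have hkey : (M:ℝ) * (1/2) ≤ (n:ℝ) := by
      rw [← heq]
      have hsub : ∑ i ∈ Finset.Icc (1:ℕ+) M', (1:ℝ)/2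
          ≤ ∑ i ∈ Finset.Icc (1:ℕ+) M', 1/(1+t*(i:ℝ)^α) := by
        apply Finset.sum_le_sum
        intro i hi
        have hiM : (i:ℕ) ≤ M := (PNat.coe_le_coe i M').mpr (Finset.mem_Icc.mp hi).2
        have hiMr : (i:ℝ) ≤ r := le_trans (by exact_mod_cast hiM) hMr
        have hra : r ^ α = t⁻¹ := rpow_neg_inv_pow ht (by positivity)
        have hiα : (i:ℝ)^α ≤ t⁻¹ := by
          rw [← hra]
          exact Real.rpow_le_rpow (by positivity) hiMr (by linarith)
        have hx : t*(i:ℝ)^α ≤ 1 := by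
          rw [← mul_inv_cancel₀ (ne_of_gt ht)]
          exact mul_le_mul_of_nonneg_left hiα (le_of_lt ht)
        have : (0:ℝ) < 1 + t*(i:ℝ)^α := by
          have := pnat_rpow_pos α i; positivity
        rw [div_le_div_iff₀ (by norm_num) this]
        linarith
      have hcard : ∑ i ∈ Finset.Icc (1:ℕ+) M', (1:ℝ)/2 = (M:ℝ)*(1/2) := by
        rw [Finset.sum_const, PNat.card_Icc]
        have : ((M':ℕ) : ℕ) + 1 - ((1:ℕ+):ℕ) = M := by simp [hM'def]
        rw [this, nsmul_eq_mul]
      rw [hcard] at hsub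
      refine le_trans hsub (Summable.sum_le_tsum _ (fun i _ => by positivity)
        (summable_inv_one_add hα ht))
    have hrM : r < M + 1 := Nat.lt_floor_add_one r
    have : (M:ℝ) ≤ 2*n := by linarith
    linarith

end tfacts

lemma pnat_cutoff_tsum' (g : ℕ → ℝ) (M : ℕ) (hM : 1 ≤ M) :
    Summable (fun i : ℕ+ => if (i:ℕ) ≤ M then g (i:ℕ) else 0) ∧
    ∑' i : ℕ+, (if (i:ℕ) ≤ M then g (i:ℕ) else 0) = ∑ k ∈ Finset.Icc 1 M, g k :=
  pnat_cutoff_tsum g ⟨M, hM⟩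

section tfacts2
variable {α t : ℝ} (hα : 1 < α) (ht : 0 < t)

include hα ht in
/-- Upper bound on `t` via `r = t^{-1/α} ≥ κ₀ n`. -/
lemma t_upper (n : ℕ) (hn : 2 ≤ n)
    (heq : ∑' i : ℕ+, 1 / (1 + t * (i : ℝ) ^ α) = (n : ℝ)) :
    ((α-1)/(2*α)) * n ≤ t ^ (-α⁻¹) := by
  have hα0 : (0:ℝ) < α := by linarith
  have hα1 : (0:ℝ) < α - 1 := by linarith
  set r := t ^ (-α⁻¹) with hrdef
  have hr0 : 0 < r := Real.rpow_pos_of_pos ht _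
  set M := ⌈r⌉₊ with hMdef
  have hM1 : 1 ≤ M := Nat.one_le_iff_ne_zero.mpr (by
    intro h0
    have := Nat.ceil_eq_zero.mp h0
    linarith)
  have hMr : r ≤ (M:ℝ) := Nat.le_ceil r
  have hMr2 : (M:ℝ) < r + 1 := Nat.ceil_lt_add_one (le_of_lt hr0)
  have hcut := pnat_cutoff_tsum' (fun _ => (1:ℝ)) M hM1
  have htail := pnat_tail α hα M hM1
  have hterm : ∀ i : ℕ+, 1/(1+t*(i:ℝ)^α)
      ≤ (if (i:ℕ) ≤ M then (1:ℝ) else 0)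
        + t⁻¹ * (if M < (i:ℕ) then ((i:ℕ):ℝ)^(-α) else 0) := by
    intro i
    have hip := pnat_rpow_pos α i
    have hd : (0:ℝ) < 1 + t*(i:ℝ)^α := by positivity
    rcases le_or_gt (i:ℕ) M with h | h
    · rw [if_pos h, if_neg (not_lt.mpr h), mul_zero, add_zero]
      rw [div_le_one hd]
      nlinarith
    · rw [if_neg (not_le.mpr h), if_pos h, zero_add]
      rw [Real.rpow_neg (by positivity), show ((i:ℕ):ℝ) = (i:ℝ) from rfl]
      rw [one_div, ← mul_inv]
      apply inv_anti₀ (by positivity)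
      nlinarith
  have hsum2 : Summable (fun i : ℕ+ => t⁻¹ * (if M < (i:ℕ) then ((i:ℕ):ℝ)^(-α) else 0)) :=
    htail.1.mul_left t⁻¹
  have hsumtot : Summable (fun i : ℕ+ => (if (i:ℕ) ≤ M then (1:ℝ) else 0)
      + t⁻¹ * (if M < (i:ℕ) then ((i:ℕ):ℝ)^(-α) else 0)) := hcut.1.add hsum2
  have hle : (n:ℝ) ≤ (M:ℝ) + t⁻¹ * ((M:ℝ)^(1-α)/(α-1)) := by
    rw [← heq]
    refine le_trans (Summable.tsum_le_tsum hterm (summable_inv_one_add hα ht) hsumtot) ?_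
    rw [Summable.tsum_add hcut.1 hsum2, hcut.2, tsum_mul_left]
    have h1 : ∑ _k ∈ Finset.Icc 1 M, (1:ℝ) = (M:ℝ) := by
      rw [Finset.sum_const, Nat.card_Icc]
      simp [nsmul_eq_mul]
    rw [h1]
    have h2 : t⁻¹ * ∑' (i:ℕ+), (if M < (i:ℕ) then ((i:ℕ):ℝ)^(-α) else 0)
        ≤ t⁻¹ * ((M:ℝ)^(1-α)/(α-1)) :=
      mul_le_mul_of_nonneg_left htail.2 (by positivity)
    linarith
  have hM1a : (M:ℝ)^(1-α) ≤ r^(1-α) :=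
    Real.rpow_le_rpow_of_nonpos hr0 hMr (by linarith)
  have hrr : t⁻¹ * r^(1-α) = r := by
    rw [hrdef, ← Real.rpow_mul (le_of_lt ht), ← Real.rpow_neg_one t,
      ← Real.rpow_add ht]
    congr 1
    field_simp
    ring
  have hnum : t⁻¹ * (M:ℝ)^(1-α) ≤ r := by
    rw [← hrr]
    exact mul_le_mul_of_nonneg_left hM1a (by positivity)
  have h3 : t⁻¹ * ((M:ℝ)^(1-α)/(α-1)) ≤ r/(α-1) := by
    rw [show t⁻¹ * ((M:ℝ)^(1-α)/(α-1)) = (t⁻¹ * (M:ℝ)^(1-α))/(α-1) by ring]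
    gcongr
  have hchain : (n:ℝ) ≤ r + 1 + r/(α-1) := by linarith
  have h4 : ((n:ℝ) - 1) * (α-1) ≤ r * α := by
    have h5 : (n:ℝ) - 1 ≤ r + r/(α-1) := by linarith
    have h6 : r + r/(α-1) = r * α/(α-1) := by field_simp; ring
    rw [h6] at h5
    rw [← le_div_iff₀ hα1]
    linarith [h5]
  have hn2 : (2:ℝ) ≤ (n:ℝ) := by exact_mod_cast hn
  rw [div_mul_eq_mul_div, div_le_iff₀ (by positivity : (0:ℝ) < 2*α)]
  nlinarith [mul_nonneg (by linarith : (0:ℝ) ≤ (n:ℝ) - 2) (le_of_lt hα1)]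

end tfacts2

lemma aux_frac_lb {x c : ℝ} (hx1 : 1 ≤ x) (hx2 : x ≤ c) (hc : 0 < c) :
    1/(1+c)^2 ≤ 1/(1+x) * (x/(1+x)) := by
  have hx0 : (0:ℝ) < x := lt_of_lt_of_le one_pos hx1
  rw [div_mul_div_comm, one_mul, div_le_div_iff₀ (by positivity) (by positivity)]
  have k1 : 0 ≤ (x-1)*(1+c)^2 := mul_nonneg (by linarith) (sq_nonneg _)
  have k2 : 0 ≤ (c-x)*(2+c+x) := mul_nonneg (by linarith) (by linarith)
  nlinarith [k1, k2]

lemma rpow_sq_comm {x : ℝ} (hx : 0 < x) (a : ℝ) : (x^a)^2 = x^(2*a) := by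
  rw [sq, ← Real.rpow_add hx]; ring_nf

set_option maxHeartbeats 1000000 in
lemma core (α b : ℝ) (hα : 1 < α) (hb : 1 < b) :
    ∃ (N : ℕ) (δ cl cl' CB CA1 CA2 : ℝ),
      0 < δ ∧ 0 < cl ∧ 0 < cl' ∧ 0 < CB ∧ 0 < CA1 ∧ 0 < CA2 ∧ 1 ≤ N ∧
      ∀ n : ℕ, N ≤ n → ∀ t : ℝ, 0 < t →
      (∑' i : ℕ+, 1 / (1 + t * (i : ℝ) ^ α) = (n : ℝ)) →
      ∀ Z : ℕ+ → ℝ, (∀ i, Z i = t * (i : ℝ) ^ α / (1 + t * (i : ℝ) ^ α)) →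
      ∀ W : ℝ, (W = (1/(n:ℝ)) * ∑' i : ℕ+, (1 - Z i)^2) →
      (0 ≤ W ∧ δ ≤ 1 - W)
      ∧ (0 ≤ ∑' i : ℕ+, (if Z i^2 < 1 - W then (i:ℝ)^(-b) * Z i^2 else 0))
      ∧ (0 ≤ ∑' i : ℕ+, (if Z i^2 < 1 - W then 0 else (i:ℝ)^(-b)))
      ∧ (∑' i : ℕ+, (i:ℝ)^(-b) * Z i^2
          ≤ (∑' i : ℕ+, (if Z i^2 < 1 - W then (i:ℝ)^(-b) * Z i^2 else 0))
            + ∑' i : ℕ+, (if Z i^2 < 1 - W then 0 else (i:ℝ)^(-b)))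
      ∧ ((∑' i : ℕ+, (if Z i^2 < 1 - W then (i:ℝ)^(-b) * Z i^2 else 0))
          ≤ ∑' i : ℕ+, (i:ℝ)^(-b) * Z i^2)
      ∧ (∑' i : ℕ+, (if Z i^2 < 1 - W then 0 else (i:ℝ)^(-b)) ≤ CB * (n:ℝ)^(1-b))
      ∧ (cl * (n:ℝ)^(1-b) ≤ ∑' i : ℕ+, (i:ℝ)^(-b) * Z i^2)
      ∧ (cl' * (n:ℝ)^(-(2*α)) ≤ ∑' i : ℕ+, (i:ℝ)^(-b) * Z i^2)
      ∧ (b < 2*α+1 → ∑' i : ℕ+, (i:ℝ)^(-b) * Z i^2 ≤ CA1 * (n:ℝ)^(1-b))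
      ∧ (2*α+1 < b → ∑' i : ℕ+, (i:ℝ)^(-b) * Z i^2 ≤ CA2 * (n:ℝ)^(-(2*α))) := by
  have hα0 : (0:ℝ) < α := by linarith
  have hα1 : (0:ℝ) < α - 1 := by linarith
  have hb1 : (0:ℝ) < b - 1 := by linarith
  set κ₀ : ℝ := (α-1)/(2*α) with hκ₀def
  have hκ₀ : 0 < κ₀ := by positivity
  have h4α : (0:ℝ) < (4:ℝ)^α := Real.rpow_pos_of_pos (by norm_num) α
  set δ : ℝ := κ₀ / (1+(4:ℝ)^α)^2 with hδdef
  have hδ : 0 < δ := by positivity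
  set κ₁ : ℝ := (Real.sqrt δ)^(α⁻¹) * κ₀ with hκ₁def
  have hsδ : 0 < Real.sqrt δ := Real.sqrt_pos.mpr hδ
  have hκ₁ : 0 < κ₁ := by positivity
  set CB : ℝ := ((κ₁/2)^(1-b))/(b-1) with hCBdef
  have hCB : 0 < CB := by positivity
  set cl : ℝ := κ₀ * (12:ℝ)^(-b)/4 with hcldef
  have hcl : 0 < cl := by positivity
  set cl' : ℝ := (3:ℝ)^(-(2*α))/4 with hcl'def
  have hcl' : 0 < cl' := by positivity
  set CA1 : ℝ := max 1 ((1+1/(2*α-b+1)) * 2^(2*α-b+1) * κ₀^(1-b)) + κ₀^(1-b)/(b-1)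
    with hCA1def
  have hCA1 : 0 < CA1 := by positivity
  set CA2 : ℝ := max 1 ((1 + 1/(b-2*α-1)) * κ₀^(-(2*α))) + κ₀^(1-b)/(b-1) with hCA2def
  have hCA2 : 0 < CA2 := by positivity
  set N : ℕ := ⌈1/κ₀ + 2/κ₁⌉₊ + 2 with hNdef
  have hN1 : 1 ≤ N := by omega
  refine ⟨N, δ, cl, cl', CB, CA1, CA2, hδ, hcl, hcl', hCB, hCA1, hCA2, hN1, ?_⟩
  intro n hNn t ht heq Z hZ W hW
  -- basic n facts
  have hn2 : 2 ≤ n := by omega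
  have hn1 : 1 ≤ n := by omega
  have hn0R : (0:ℝ) < n := by exact_mod_cast Nat.lt_of_lt_of_le Nat.zero_lt_one hn1
  have hn1R : (1:ℝ) ≤ n := by exact_mod_cast hn1
  have hNR : (1/κ₀ + 2/κ₁ : ℝ) ≤ n := by
    have h1 : (1/κ₀ + 2/κ₁ : ℝ) ≤ (⌈1/κ₀ + 2/κ₁⌉₊ : ℝ) := Nat.le_ceil _
    have h2 : ((⌈1/κ₀ + 2/κ₁⌉₊ : ℕ) : ℝ) ≤ (N:ℝ) := by
      rw [hNdef]; push_cast; linarith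
    have h3 : ((N:ℕ):ℝ) ≤ (n:ℝ) := by exact_mod_cast hNn
    linarith
  have hκ₀n : 1 ≤ κ₀ * n := by
    have h1 : 1/κ₀ ≤ (n:ℝ) := by
      have : 0 ≤ 2/κ₁ := by positivity
      linarith
    calc (1:ℝ) = κ₀ * (1/κ₀) := by field_simp
      _ ≤ κ₀ * n := by
          apply mul_le_mul_of_nonneg_left h1 (le_of_lt hκ₀)
  have hκ₁n : 2 ≤ κ₁ * n := by
    have h1 : 2/κ₁ ≤ (n:ℝ) := by
      have : 0 ≤ 1/κ₀ := by positivity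
      linarith
    calc (2:ℝ) = κ₁ * (2/κ₁) := by field_simp
      _ ≤ κ₁ * n := by
          apply mul_le_mul_of_nonneg_left h1 (le_of_lt hκ₁)
  -- r facts
  set r : ℝ := t ^ (-α⁻¹) with hrdef
  have hr0 : 0 < r := Real.rpow_pos_of_pos ht _
  have hrlow : κ₀ * n ≤ r := t_upper hα ht n hn2 heq
  have hrhigh : r ≤ 3 * n := t_lower hα ht n hn1 heq
  have hr1 : 1 ≤ r := le_trans hκ₀n hrlow
  have hrα : r ^ α = t⁻¹ := rpow_neg_inv_pow ht (ne_of_gt hα0)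
  have htr : t * r ^ α = 1 := by rw [hrα]; field_simp
  have htval : t = r ^ (-α) := by
    rw [Real.rpow_neg (le_of_lt hr0), hrα, inv_inv]
  have htle : t ≤ (κ₀ * n) ^ (-α) := by
    rw [htval]
    exact Real.rpow_le_rpow_of_nonpos (by positivity) hrlow (by linarith)
  have ht1 : t ≤ 1 := by
    refine le_trans htle (Real.rpow_le_one_of_one_le_of_nonpos hκ₀n (by linarith))
  have htlow : (3 * (n:ℝ)) ^ (-α) ≤ t := by
    rw [htval]
    exact Real.rpow_le_rpow_of_nonpos hr0 hrhigh (by linarith)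
  -- Z facts
  have hxpos : ∀ i : ℕ+, 0 < t * (i:ℝ)^α := by
    intro i; have := pnat_rpow_pos α i; positivity
  have hdpos : ∀ i : ℕ+, 0 < 1 + t * (i:ℝ)^α := by
    intro i; have := hxpos i; linarith
  have hZ0 : ∀ i, 0 ≤ Z i := by
    intro i; rw [hZ i]
    exact le_of_lt (div_pos (hxpos i) (hdpos i))
  have hZ1 : ∀ i, Z i ≤ 1 := by
    intro i; rw [hZ i, div_le_one (hdpos i)]; linarith
  have h1Z : ∀ i, 1 - Z i = 1/(1 + t * (i:ℝ)^α) := by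
    intro i; rw [hZ i]; field_simp; ring
  have hZle : ∀ i, Z i ≤ t * (i:ℝ)^α := by
    intro i; rw [hZ i]
    exact div_le_self (le_of_lt (hxpos i)) (by linarith [hxpos i])
  -- summability
  have sum0 : Summable (fun i : ℕ+ => 1/(1 + t * (i:ℝ)^α)) := summable_inv_one_add hα ht
  have sum1m : Summable (fun i : ℕ+ => 1 - Z i) := sum0.congr (fun i => (h1Z i).symm)
  have h1Z0 : ∀ i, 0 ≤ 1 - Z i := fun i => by linarith [hZ1 i]
  have sumZ2 : Summable (fun i : ℕ+ => (1 - Z i)^2) := by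
    apply Summable.of_nonneg_of_le (fun i => sq_nonneg _) _ sum1m
    intro i
    have h1 := h1Z0 i
    nlinarith [hZ0 i]
  have sumZZ : Summable (fun i : ℕ+ => (1 - Z i) * Z i) := by
    apply Summable.of_nonneg_of_le (fun i => mul_nonneg (h1Z0 i) (hZ0 i)) _ sum1m
    intro i
    exact mul_le_of_le_one_right (h1Z0 i) (hZ1 i)
  have sumb : Summable (fun i : ℕ+ => (i:ℝ)^(-b)) := summable_pnat_rpow hb
  have hZsq01 : ∀ i, Z i^2 ≤ 1 := by
    intro i; nlinarith [hZ0 i, hZ1 i]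
  have sumbZ : Summable (fun i : ℕ+ => (i:ℝ)^(-b) * Z i^2) := by
    apply Summable.of_nonneg_of_le
      (fun i => mul_nonneg (le_of_lt (pnat_rpow_pos _ i)) (sq_nonneg _)) _ sumb
    intro i
    exact mul_le_of_le_one_right (le_of_lt (pnat_rpow_pos _ i)) (hZsq01 i)
  have sumA : Summable (fun i : ℕ+ => if Z i^2 < 1 - W then (i:ℝ)^(-b) * Z i^2 else 0) := by
    apply Summable.of_nonneg_of_le _ _ sumbZ
    · intro i; split
      · exact mul_nonneg (le_of_lt (pnat_rpow_pos _ i)) (sq_nonneg _)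
      · exact le_refl 0
    · intro i; split
      · exact le_refl _
      · exact mul_nonneg (le_of_lt (pnat_rpow_pos _ i)) (sq_nonneg _)
  have sumB : Summable (fun i : ℕ+ => if Z i^2 < 1 - W then 0 else (i:ℝ)^(-b)) := by
    apply Summable.of_nonneg_of_le _ _ sumb
    · intro i; split
      · exact le_refl 0
      · exact le_of_lt (pnat_rpow_pos _ i)
    · intro i; split
      · exact le_of_lt (pnat_rpow_pos _ i)
      · exact le_refl _
  -- tsum identities
  have htsum1 : ∑' i : ℕ+, (1 - Z i) = (n:ℝ) := by
    rw [tsum_congr h1Z]; exact heq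
  have hW0 : 0 ≤ W := by
    rw [hW]
    exact mul_nonneg (by positivity) (tsum_nonneg (fun i => sq_nonneg _))
  have h1W : 1 - W = (1/(n:ℝ)) * ∑' i : ℕ+, (1 - Z i) * Z i := by
    have hcongr : ∀ i : ℕ+, (1 - Z i) * Z i = (1 - Z i) - (1 - Z i)^2 := by
      intro i; ring
    rw [tsum_congr hcongr, Summable.tsum_sub sum1m sumZ2, htsum1, hW]
    field_simp
  -- the cutoff index
  set M : ℕ := ⌈r⌉₊ with hMdef
  have hM1 : 1 ≤ M := by
    have := Nat.ceil_pos.mpr hr0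
    omega
  set M' : ℕ+ := ⟨M, hM1⟩ with hM'def
  have hMcoe : ((M':ℕ+):ℕ) = M := rfl
  have hMr : r ≤ (M:ℝ) := Nat.le_ceil r
  have hMup : (M:ℝ) ≤ 2*r := by
    have h0 := Nat.ceil_lt_add_one (le_of_lt hr0)
    have h1 : (M:ℝ) < r + 1 := by exact_mod_cast h0
    linarith
  have hM_ge : κ₀ * n ≤ (M:ℝ) := le_trans hrlow hMr
  -- lower bound for 1 - W
  have hδ1W : δ ≤ 1 - W := by
    rw [h1W]
    have hc0 : (0:ℝ) < 1/(1+(4:ℝ)^α)^2 := by positivity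
    have hterm : ∀ i ∈ Finset.Icc M' (2*M'), 1/(1+(4:ℝ)^α)^2 ≤ (1 - Z i) * Z i := by
      intro i hi
      rw [Finset.mem_Icc] at hi
      have hiM : (M:ℝ) ≤ (i:ℝ) := by
        have := (PNat.coe_le_coe M' i).mpr hi.1
        exact_mod_cast this
      have hi2M : (i:ℝ) ≤ 2*(M:ℝ) := by
        have h1 := (PNat.coe_le_coe i (2*M')).mpr hi.2
        have h2 : ((2*M' : ℕ+):ℕ) = 2*M := by
          rw [PNat.mul_coe]; rfl
        rw [h2] at h1
        exact_mod_cast h1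
      have hx1 : 1 ≤ t * (i:ℝ)^α := by
        have hiR : r ≤ (i:ℝ) := le_trans hMr hiM
        have h3 : r^α ≤ (i:ℝ)^α := Real.rpow_le_rpow (le_of_lt hr0) hiR (le_of_lt hα0)
        calc (1:ℝ) = t * r^α := htr.symm
          _ ≤ t * (i:ℝ)^α := mul_le_mul_of_nonneg_left h3 (le_of_lt ht)
      have hx2 : t * (i:ℝ)^α ≤ (4:ℝ)^α := by
        have hi4r : (i:ℝ) ≤ 4*r := by linarith
        have h3 : (i:ℝ)^α ≤ (4*r)^α :=
          Real.rpow_le_rpow (by positivity) hi4r (le_of_lt hα0)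
        have h4 : ((4:ℝ)*r)^α = (4:ℝ)^α * r^α :=
          Real.mul_rpow (by norm_num) (le_of_lt hr0)
        calc t * (i:ℝ)^α ≤ t * ((4:ℝ)^α * r^α) := by
              rw [← h4]
              exact mul_le_mul_of_nonneg_left h3 (le_of_lt ht)
          _ = (4:ℝ)^α * (t * r^α) := by ring
          _ = (4:ℝ)^α := by rw [htr, mul_one]
      rw [h1Z i, hZ i]
      exact aux_frac_lb hx1 hx2 h4α
    have hcard : (Finset.Icc M' (2*M')).card = M + 1 := by
      rw [PNat.card_Icc]
      rw [PNat.mul_coe]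
      simp [hMcoe]
      omega
    have hsum : (M:ℝ) * (1/(1+(4:ℝ)^α)^2) ≤ ∑ i ∈ Finset.Icc M' (2*M'), (1 - Z i) * Z i := by
      have h5 := Finset.card_nsmul_le_sum (Finset.Icc M' (2*M')) _ _ hterm
      rw [hcard, nsmul_eq_mul] at h5
      push_cast at h5
      have h7 : (M:ℝ) * (1/(1+(4:ℝ)^α)^2) ≤ ((M:ℝ)+1) * (1/(1+(4:ℝ)^α)^2) :=
        mul_le_mul_of_nonneg_right (by linarith) (le_of_lt hc0)
      linarith [h5, h7]
    have htsum : ∑ i ∈ Finset.Icc M' (2*M'), (1 - Z i) * Z i ≤ ∑' i : ℕ+, (1 - Z i) * Z i :=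
      Summable.sum_le_tsum _ (fun i _ => mul_nonneg (h1Z0 i) (hZ0 i)) sumZZ
    have hM_ge : κ₀ * n ≤ (M:ℝ) := le_trans hrlow hMr
    have hfin : δ ≤ (1/(n:ℝ)) * ((M:ℝ) * (1/(1+(4:ℝ)^α)^2)) := by
      rw [hδdef]
      rw [div_eq_mul_one_div κ₀]
      have h6 : κ₀ * (1/(1+(4:ℝ)^α)^2) ≤ ((M:ℝ)/(n:ℝ)) * (1/(1+(4:ℝ)^α)^2) := by
        apply mul_le_mul_of_nonneg_right _ (le_of_lt hc0)
        rw [le_div_iff₀ hn0R]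
        calc κ₀ * n ≤ (M:ℝ) := hM_ge
          _ = (M:ℝ) := rfl
      calc κ₀ * (1/(1+(4:ℝ)^α)^2) ≤ ((M:ℝ)/(n:ℝ)) * (1/(1+(4:ℝ)^α)^2) := h6
        _ = (1/(n:ℝ)) * ((M:ℝ) * (1/(1+(4:ℝ)^α)^2)) := by ring
    refine le_trans hfin ?_
    apply mul_le_mul_of_nonneg_left _ (by positivity)
    exact le_trans hsum htsum
  -- conclusions
  have hconc1 : 0 ≤ ∑' i : ℕ+, (if Z i^2 < 1 - W then (i:ℝ)^(-b) * Z i^2 else 0) := by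
    apply tsum_nonneg
    intro i; split
    · exact mul_nonneg (le_of_lt (pnat_rpow_pos _ i)) (sq_nonneg _)
    · exact le_refl 0
  have hconc2 : 0 ≤ ∑' i : ℕ+, (if Z i^2 < 1 - W then 0 else (i:ℝ)^(-b)) := by
    apply tsum_nonneg
    intro i; split
    · exact le_refl 0
    · exact le_of_lt (pnat_rpow_pos _ i)
  have hsplit : ∑' i : ℕ+, (i:ℝ)^(-b) * Z i^2
      ≤ (∑' i : ℕ+, (if Z i^2 < 1 - W then (i:ℝ)^(-b) * Z i^2 else 0))
        + ∑' i : ℕ+, (if Z i^2 < 1 - W then 0 else (i:ℝ)^(-b)) := by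
    rw [← Summable.tsum_add sumA sumB]
    apply Summable.tsum_le_tsum _ sumbZ (sumA.add sumB)
    intro i
    by_cases hc : Z i^2 < 1 - W
    · rw [if_pos hc, if_pos hc, add_zero]
    · rw [if_neg hc, if_neg hc, zero_add]
      exact mul_le_of_le_one_right (le_of_lt (pnat_rpow_pos _ i)) (hZsq01 i)
  have hAle : (∑' i : ℕ+, (if Z i^2 < 1 - W then (i:ℝ)^(-b) * Z i^2 else 0))
      ≤ ∑' i : ℕ+, (i:ℝ)^(-b) * Z i^2 := by
    apply Summable.tsum_le_tsum _ sumA sumbZ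
    intro i; split
    · exact le_refl _
    · exact mul_nonneg (le_of_lt (pnat_rpow_pos _ i)) (sq_nonneg _)
  have hBle : ∑' i : ℕ+, (if Z i^2 < 1 - W then 0 else (i:ℝ)^(-b)) ≤ CB * (n:ℝ)^(1-b) := by
    set m : ℕ := ⌈κ₁ * n⌉₊ with hmdef
    have hmge : κ₁ * n ≤ (m:ℝ) := Nat.le_ceil _
    have hm2 : 2 ≤ m := by
      have h0 : (2:ℝ) ≤ (m:ℝ) := le_trans hκ₁n hmge
      exact_mod_cast h0
    set m₁ : ℕ := m - 1 with hm₁def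
    have hm₁1 : 1 ≤ m₁ := by omega
    have hm₁c : (m₁:ℝ) = (m:ℝ) - 1 := by
      rw [hm₁def]
      push_cast [Nat.cast_sub (by omega : 1 ≤ m)]
      ring
    have hm₁r : κ₁ * n / 2 ≤ (m₁:ℝ) := by
      rw [hm₁c]
      linarith [hmge, hκ₁n]
    have htailm := pnat_tail b hb m₁ hm₁1
    have hterm : ∀ i : ℕ+, (if Z i^2 < 1 - W then 0 else (i:ℝ)^(-b))
        ≤ (if m₁ < (i:ℕ) then ((i:ℕ):ℝ)^(-b) else 0) := by
      intro i
      by_cases hc : Z i^2 < 1 - W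
      · rw [if_pos hc]
        split
        · exact le_of_lt (pnat_rpow_pos _ i)
        · exact le_refl 0
      · rw [if_neg hc]
        push_neg at hc
        have hZd : δ ≤ Z i^2 := le_trans hδ1W hc
        have hsq : Real.sqrt δ ≤ Z i := by
          have h1 : Real.sqrt δ ≤ Real.sqrt (Z i^2) := Real.sqrt_le_sqrt hZd
          rwa [Real.sqrt_sq (hZ0 i)] at h1
        have hxge : Real.sqrt δ ≤ t * (i:ℝ)^α := le_trans hsq (hZle i)
        have hρα : ((Real.sqrt δ)^(α⁻¹) * r)^α = Real.sqrt δ * r^α := by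
          rw [Real.mul_rpow (by positivity) (le_of_lt hr0)]
          congr 1
          rw [← Real.rpow_mul (le_of_lt hsδ), inv_mul_cancel₀ (ne_of_gt hα0),
            Real.rpow_one]
        have h2 : Real.sqrt δ * r^α ≤ (i:ℝ)^α := by
          have h3 : t * (Real.sqrt δ * r^α) ≤ t * (i:ℝ)^α := by
            calc t * (Real.sqrt δ * r^α) = Real.sqrt δ * (t * r^α) := by ring
              _ = Real.sqrt δ := by rw [htr, mul_one]
              _ ≤ t * (i:ℝ)^α := hxge
          exact le_of_mul_le_mul_left h3 ht
        have hρi : (Real.sqrt δ)^(α⁻¹) * r ≤ (i:ℝ) := by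
          by_contra hlt
          push_neg at hlt
          have h4 : (i:ℝ)^α < ((Real.sqrt δ)^(α⁻¹) * r)^α :=
            Real.rpow_lt_rpow (by positivity) hlt hα0
          rw [hρα] at h4
          linarith [h2]
        have hκ₁i : κ₁ * n ≤ (i:ℝ) := by
          refine le_trans ?_ hρi
          rw [hκ₁def]
          calc (Real.sqrt δ)^(α⁻¹) * κ₀ * n = (Real.sqrt δ)^(α⁻¹) * (κ₀ * n) := by ring
            _ ≤ (Real.sqrt δ)^(α⁻¹) * r :=
                mul_le_mul_of_nonneg_left hrlow (by positivity)
        have hmi : m ≤ (i:ℕ) := by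
          rw [hmdef]
          exact Nat.ceil_le.mpr (by exact_mod_cast hκ₁i)
        have hm₁i : m₁ < (i:ℕ) := by omega
        rw [if_pos hm₁i]
    refine le_trans (Summable.tsum_le_tsum hterm sumB htailm.1) ?_
    refine le_trans htailm.2 ?_
    have hpos1 : (0:ℝ) < κ₁*n/2 := by positivity
    have h8 : (m₁:ℝ)^(1-b) ≤ (κ₁*(n:ℝ)/2)^(1-b) :=
      Real.rpow_le_rpow_of_nonpos hpos1 hm₁r (by linarith)
    have h9 : (κ₁*(n:ℝ)/2)^(1-b) = (κ₁/2)^(1-b) * (n:ℝ)^(1-b) := by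
      rw [show κ₁*(n:ℝ)/2 = (κ₁/2)*(n:ℝ) by ring]
      exact Real.mul_rpow (by positivity) (by positivity)
    rw [hCBdef]
    calc (m₁:ℝ)^(1-b)/(b-1) ≤ (κ₁*(n:ℝ)/2)^(1-b)/(b-1) := by gcongr
      _ = ((κ₁/2)^(1-b)/(b-1)) * (n:ℝ)^(1-b) := by rw [h9]; ring
  have hlow1 : cl * (n:ℝ)^(1-b) ≤ ∑' i : ℕ+, (i:ℝ)^(-b) * Z i^2 := by
    have hterm : ∀ i ∈ Finset.Icc M' (2*M'),
        (12*(n:ℝ))^(-b) * (1/4) ≤ (i:ℝ)^(-b) * Z i^2 := by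
      intro i hi
      rw [Finset.mem_Icc] at hi
      have hiM : (M:ℝ) ≤ (i:ℝ) := by
        have h0 := (PNat.coe_le_coe M' i).mpr hi.1
        exact_mod_cast h0
      have hi2M : (i:ℝ) ≤ 2*(M:ℝ) := by
        have h1 := (PNat.coe_le_coe i (2*M')).mpr hi.2
        have h2 : ((2*M' : ℕ+):ℕ) = 2*M := by rw [PNat.mul_coe]; rfl
        rw [h2] at h1
        exact_mod_cast h1
      have hx1 : 1 ≤ t * (i:ℝ)^α := by
        have hiR : r ≤ (i:ℝ) := le_trans hMr hiM
        have h3 : r^α ≤ (i:ℝ)^α := Real.rpow_le_rpow (le_of_lt hr0) hiR (le_of_lt hα0)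
        calc (1:ℝ) = t * r^α := htr.symm
          _ ≤ t * (i:ℝ)^α := mul_le_mul_of_nonneg_left h3 (le_of_lt ht)
      have hZhalf : 1/2 ≤ Z i := by
        rw [hZ i, le_div_iff₀ (hdpos i)]
        linarith
      have hZsq : 1/4 ≤ Z i^2 := by
        have h4 := mul_le_mul hZhalf hZhalf (by norm_num) (hZ0 i)
        rw [sq]
        linarith
      have hi12 : (i:ℝ) ≤ 12*(n:ℝ) := by linarith [hi2M, hMup, hrhigh]
      have hib : (12*(n:ℝ))^(-b) ≤ (i:ℝ)^(-b) :=
        Real.rpow_le_rpow_of_nonpos (by positivity) hi12 (by linarith)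
      exact mul_le_mul hib hZsq (by norm_num) (le_of_lt (pnat_rpow_pos _ i))
    have hcard : (Finset.Icc M' (2*M')).card = M + 1 := by
      rw [PNat.card_Icc, PNat.mul_coe]
      simp [hMcoe]
      omega
    have h5 := Finset.card_nsmul_le_sum (Finset.Icc M' (2*M')) _ _ hterm
    rw [hcard, nsmul_eq_mul] at h5
    push_cast at h5
    have htpos : (0:ℝ) ≤ (12*(n:ℝ))^(-b) * (1/4) := by positivity
    have h6 : (M:ℝ) * ((12*(n:ℝ))^(-b) * (1/4))
        ≤ ∑ i ∈ Finset.Icc M' (2*M'), (i:ℝ)^(-b) * Z i^2 := by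
      have h7 : (M:ℝ) * ((12*(n:ℝ))^(-b) * (1/4))
          ≤ ((M:ℝ)+1) * ((12*(n:ℝ))^(-b) * (1/4)) :=
        mul_le_mul_of_nonneg_right (by linarith) htpos
      linarith [h5, h7]
    have h8 : ∑ i ∈ Finset.Icc M' (2*M'), (i:ℝ)^(-b) * Z i^2
        ≤ ∑' i : ℕ+, (i:ℝ)^(-b) * Z i^2 :=
      Summable.sum_le_tsum _ (fun i _ => mul_nonneg (le_of_lt (pnat_rpow_pos _ i)) (sq_nonneg _))
        sumbZ
    have h12 : (12*(n:ℝ))^(-b) = (12:ℝ)^(-b) * (n:ℝ)^(-b) :=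
      Real.mul_rpow (by norm_num) (le_of_lt hn0R)
    have hnn : (n:ℝ)^(1-b) = (n:ℝ) * (n:ℝ)^(-b) := by
      rw [show (1-b:ℝ) = 1 + (-b) by ring, Real.rpow_add hn0R, Real.rpow_one]
    have hfin : cl * (n:ℝ)^(1-b) ≤ (M:ℝ) * ((12*(n:ℝ))^(-b) * (1/4)) := by
      rw [hcldef, hnn, h12]
      have hq : κ₀ * (12:ℝ)^(-b)/4 * ((n:ℝ) * (n:ℝ)^(-b))
          = (κ₀*(n:ℝ)) * ((12:ℝ)^(-b) * (n:ℝ)^(-b) * (1/4)) := by ring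
      rw [hq]
      exact mul_le_mul_of_nonneg_right hM_ge (by positivity)
    linarith [hfin, h6, h8]
  have hlow2 : cl' * (n:ℝ)^(-(2*α)) ≤ ∑' i : ℕ+, (i:ℝ)^(-b) * Z i^2 := by
    have h1 : ∑ i ∈ ({1} : Finset ℕ+), (i:ℝ)^(-b) * Z i^2
        ≤ ∑' i : ℕ+, (i:ℝ)^(-b) * Z i^2 :=
      Summable.sum_le_tsum _ (fun i _ => mul_nonneg (le_of_lt (pnat_rpow_pos _ i)) (sq_nonneg _))
        sumbZ
    rw [Finset.sum_singleton] at h1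
    have hcoe1 : ((1:ℕ+):ℝ) = 1 := by norm_num
    have hZ1v : Z 1 = t/(1+t) := by
      rw [hZ 1, hcoe1, Real.one_rpow, mul_one]
    have hts : t^2 ≤ t := by
      rw [sq]
      calc t*t ≤ t*1 := mul_le_mul_of_nonneg_left ht1 (le_of_lt ht)
        _ = t := mul_one t
    have hZhalf : t/2 ≤ Z 1 := by
      rw [hZ1v, div_le_div_iff₀ (by norm_num) (by linarith : (0:ℝ) < 1+t)]
      have hexp : t*(1+t) = t + t^2 := by ring
      rw [hexp]
      linarith [hts]
    have hZsq : t^2/4 ≤ Z 1^2 := by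
      have h4 := mul_le_mul hZhalf hZhalf (by positivity) (hZ0 1)
      have h5 : t^2/4 = (t/2)*(t/2) := by ring
      rw [h5, sq]
      linarith [h4]
    have h3n : (0:ℝ) < 3*(n:ℝ) := by linarith
    have htsq : ((3*(n:ℝ))^(-α))^2 ≤ t^2 := by
      have := mul_self_le_mul_self (le_of_lt (Real.rpow_pos_of_pos h3n (-α))) htlow
      rw [sq, sq]
      linarith [this]
    have halg : cl' * (n:ℝ)^(-(2*α)) = ((3*(n:ℝ))^(-α))^2 / 4 := by
      rw [hcl'def, rpow_sq_comm h3n (-α), show (2*(-α):ℝ) = -(2*α) by ring]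
      rw [Real.mul_rpow (by norm_num : (0:ℝ) ≤ 3) (le_of_lt hn0R)]
      ring
    have hterm1 : cl' * (n:ℝ)^(-(2*α)) ≤ ((1:ℕ+):ℝ)^(-b) * Z 1^2 := by
      rw [hcoe1, Real.one_rpow, one_mul, halg]
      linarith [htsq, hZsq]
    linarith [hterm1, h1]
  -- shared upper-bound machinery
  have htermU : ∀ i : ℕ+, (i:ℝ)^(-b) * Z i^2
      ≤ (if (i:ℕ) ≤ M then t^2 * ((i:ℕ):ℝ)^(2*α-b) else 0)
        + (if M < (i:ℕ) then ((i:ℕ):ℝ)^(-b) else 0) := by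
    intro i
    rcases le_or_gt (i:ℕ) M with h | h
    · rw [if_pos h, if_neg (not_lt.mpr h), add_zero]
      have hZx2 : Z i^2 ≤ (t*(i:ℝ)^α)^2 := pow_le_pow_left₀ (hZ0 i) (hZle i) 2
      have hstep : (i:ℝ)^(-b) * Z i^2 ≤ (i:ℝ)^(-b) * (t*(i:ℝ)^α)^2 :=
        mul_le_mul_of_nonneg_left hZx2 (le_of_lt (pnat_rpow_pos _ i))
      refine le_trans hstep (le_of_eq ?_)
      have hipos : (0:ℝ) < (i:ℝ) := lt_of_lt_of_le one_pos (pnat_one_le i)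
      rw [mul_pow, rpow_sq_comm hipos α]
      rw [show (i:ℝ)^(-b) * (t^2 * (i:ℝ)^(2*α)) = t^2 * ((i:ℝ)^(-b) * (i:ℝ)^(2*α)) by
        ring]
      rw [← Real.rpow_add hipos]
      rw [show (-b + 2*α : ℝ) = 2*α - b by ring]
    · rw [if_neg (not_le.mpr h), if_pos h, zero_add]
      exact mul_le_of_le_one_right (le_of_lt (pnat_rpow_pos _ i)) (hZsq01 i)
  have hcutU := pnat_cutoff_tsum' (fun k => t^2 * (k:ℝ)^(2*α-b)) M hM1
  have htailU := pnat_tail b hb M hM1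
  have hsumU : ∑' i : ℕ+, (i:ℝ)^(-b) * Z i^2
      ≤ t^2 * (∑ k ∈ Finset.Icc 1 M, (k:ℝ)^(2*α-b)) + (M:ℝ)^(1-b)/(b-1) := by
    have t1 := Summable.tsum_le_tsum htermU sumbZ (hcutU.1.add htailU.1)
    rw [Summable.tsum_add hcutU.1 htailU.1, hcutU.2] at t1
    rw [Finset.mul_sum]
    linarith [t1, htailU.2]
  have htail_bound : (M:ℝ)^(1-b)/(b-1) ≤ κ₀^(1-b)/(b-1) * (n:ℝ)^(1-b) := by
    have h1 : (M:ℝ)^(1-b) ≤ (κ₀*(n:ℝ))^(1-b) :=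
      Real.rpow_le_rpow_of_nonpos (by positivity) hM_ge (by linarith)
    have h2 : (κ₀*(n:ℝ))^(1-b) = κ₀^(1-b) * (n:ℝ)^(1-b) :=
      Real.mul_rpow (le_of_lt hκ₀) (le_of_lt hn0R)
    calc (M:ℝ)^(1-b)/(b-1) ≤ (κ₀*(n:ℝ))^(1-b)/(b-1) := by gcongr
      _ = κ₀^(1-b)/(b-1) * (n:ℝ)^(1-b) := by rw [h2]; ring
  have hnb1 : (0:ℝ) ≤ (n:ℝ)^(1-b) := Real.rpow_nonneg (le_of_lt hn0R) _
  have hnb2 : (0:ℝ) ≤ (n:ℝ)^(-(2*α)) := Real.rpow_nonneg (le_of_lt hn0R) _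
  have hup1 : b < 2*α+1 → ∑' i : ℕ+, (i:ℝ)^(-b) * Z i^2 ≤ CA1 * (n:ℝ)^(1-b) := by
    intro hcase
    have hs1 : (0:ℝ) < 2*α - b + 1 := by linarith
    have hc' : (0:ℝ) < 1+1/(2*α-b+1) := by
      have := one_div_pos.mpr hs1
      linarith
    have h2e : (0:ℝ) < (2:ℝ)^(2*α-b+1) := Real.rpow_pos_of_pos (by norm_num) _
    have hhead := nat_Icc_rpow_le (2*α-b) (by linarith) M
    have hM2r : (M:ℝ)^(2*α-b+1) ≤ (2*r)^(2*α-b+1) :=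
      Real.rpow_le_rpow (Nat.cast_nonneg M) hMup (by linarith)
    have h2r : ((2:ℝ)*r)^(2*α-b+1) = 2^(2*α-b+1) * r^(2*α-b+1) :=
      Real.mul_rpow (by norm_num) (le_of_lt hr0)
    have hM2r' : (M:ℝ)^(2*α-b+1) ≤ 2^(2*α-b+1) * r^(2*α-b+1) := by
      rw [← h2r]; exact hM2r
    have hrpow : t^2 * r^(2*α-b+1) = t^((b-1)/α) := by
      rw [hrdef, ← Real.rpow_mul (le_of_lt ht)]
      rw [show (t^2 : ℝ) = t^(2:ℝ) by rw [← Real.rpow_natCast t 2]; norm_num]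
      rw [← Real.rpow_add ht]
      congr 1
      field_simp
      ring
    have htb : t^((b-1)/α) ≤ κ₀^(1-b) * (n:ℝ)^(1-b) := by
      have h1 : t^((b-1)/α) ≤ ((κ₀*(n:ℝ))^(-α))^((b-1)/α) :=
        Real.rpow_le_rpow (le_of_lt ht) htle (by positivity)
      have h2 : ((κ₀*(n:ℝ))^(-α))^((b-1)/α) = (κ₀*(n:ℝ))^(1-b) := by
        rw [← Real.rpow_mul (by positivity)]
        congr 1
        field_simp
        ring
      have h3 : (κ₀*(n:ℝ))^(1-b) = κ₀^(1-b) * (n:ℝ)^(1-b) :=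
        Real.mul_rpow (le_of_lt hκ₀) (le_of_lt hn0R)
      rw [h2, h3] at h1
      exact h1
    have hheadb : t^2 * (∑ k ∈ Finset.Icc 1 M, (k:ℝ)^(2*α-b))
        ≤ ((1+1/(2*α-b+1)) * 2^(2*α-b+1) * κ₀^(1-b)) * (n:ℝ)^(1-b) := by
      calc t^2 * (∑ k ∈ Finset.Icc 1 M, (k:ℝ)^(2*α-b))
          ≤ t^2 * ((1+1/(2*α-b+1)) * (M:ℝ)^(2*α-b+1)) :=
            mul_le_mul_of_nonneg_left hhead (sq_nonneg t)
        _ ≤ t^2 * ((1+1/(2*α-b+1)) * (2^(2*α-b+1) * r^(2*α-b+1))) := by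
            apply mul_le_mul_of_nonneg_left _ (sq_nonneg t)
            exact mul_le_mul_of_nonneg_left hM2r' (le_of_lt hc')
        _ = ((1+1/(2*α-b+1)) * 2^(2*α-b+1)) * (t^2 * r^(2*α-b+1)) := by ring
        _ = ((1+1/(2*α-b+1)) * 2^(2*α-b+1)) * t^((b-1)/α) := by rw [hrpow]
        _ ≤ ((1+1/(2*α-b+1)) * 2^(2*α-b+1)) * (κ₀^(1-b) * (n:ℝ)^(1-b)) :=
            mul_le_mul_of_nonneg_left htb (by positivity)
        _ = ((1+1/(2*α-b+1)) * 2^(2*α-b+1) * κ₀^(1-b)) * (n:ℝ)^(1-b) := by ring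
    have h10 : ((1+1/(2*α-b+1)) * 2^(2*α-b+1) * κ₀^(1-b))
        ≤ max 1 ((1+1/(2*α-b+1)) * 2^(2*α-b+1) * κ₀^(1-b)) := le_max_right _ _
    have h11 := mul_le_mul_of_nonneg_right h10 hnb1
    rw [hCA1def]
    have hexp : (max 1 ((1+1/(2*α-b+1)) * 2^(2*α-b+1) * κ₀^(1-b)) + κ₀^(1-b)/(b-1))
          * (n:ℝ)^(1-b)
        = (max 1 ((1+1/(2*α-b+1)) * 2^(2*α-b+1) * κ₀^(1-b))) * (n:ℝ)^(1-b)
          + κ₀^(1-b)/(b-1) * (n:ℝ)^(1-b) := by ring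
    rw [hexp]
    linarith [hsumU, hheadb, htail_bound, h11]
  have hup2 : 2*α+1 < b → ∑' i : ℕ+, (i:ℝ)^(-b) * Z i^2 ≤ CA2 * (n:ℝ)^(-(2*α)) := by
    intro hcase
    have hs' : 1 < b - 2*α := by linarith
    have hsd : (0:ℝ) < b - 2*α - 1 := by linarith
    have hcong : ∀ k ∈ Finset.Icc 1 M, (k:ℝ)^(2*α-b) = (k:ℝ)^(-(b-2*α)) := by
      intro k _
      congr 1
      ring
    have hsplit2 : ∑ k ∈ Finset.Icc 1 M, (k:ℝ)^(2*α-b) ≤ 1 + 1/(b-2*α-1) := by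
      rw [Finset.sum_congr rfl hcong]
      rw [Finset.Icc_eq_cons_Ioc hM1, Finset.sum_cons]
      have h1 : ((1:ℕ):ℝ)^(-(b-2*α)) = 1 := by rw [Nat.cast_one, Real.one_rpow]
      have h2 := nat_Ioc_rpow_le (b-2*α) hs' 1 (le_refl 1) M
      have h3 : ((1:ℕ):ℝ)^(1-(b-2*α)) = 1 := by rw [Nat.cast_one, Real.one_rpow]
      rw [h3] at h2
      rw [h1]
      have h4 : (1:ℝ)/(b-2*α-1) = 1/(b-2*α-1) := rfl
      linarith [h2]
    have ht2b : t^2 ≤ κ₀^(-(2*α)) * (n:ℝ)^(-(2*α)) := by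
      have h1 : t^2 ≤ ((κ₀*(n:ℝ))^(-α))^2 := pow_le_pow_left₀ (le_of_lt ht) htle 2
      have h2 : ((κ₀*(n:ℝ))^(-α))^2 = (κ₀*(n:ℝ))^(-(2*α)) := by
        rw [rpow_sq_comm (by positivity) (-α)]
        congr 1
        ring
      have h3 : (κ₀*(n:ℝ))^(-(2*α)) = κ₀^(-(2*α)) * (n:ℝ)^(-(2*α)) :=
        Real.mul_rpow (le_of_lt hκ₀) (le_of_lt hn0R)
      rw [h2, h3] at h1
      exact h1
    have hpos2 : (0:ℝ) ≤ 1 + 1/(b-2*α-1) := by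
      have := one_div_pos.mpr hsd
      linarith
    have hheadb2 : t^2 * (∑ k ∈ Finset.Icc 1 M, (k:ℝ)^(2*α-b))
        ≤ ((1+1/(b-2*α-1)) * κ₀^(-(2*α))) * (n:ℝ)^(-(2*α)) := by
      calc t^2 * (∑ k ∈ Finset.Icc 1 M, (k:ℝ)^(2*α-b))
          ≤ t^2 * (1+1/(b-2*α-1)) := mul_le_mul_of_nonneg_left hsplit2 (sq_nonneg t)
        _ = (1+1/(b-2*α-1)) * t^2 := by ring
        _ ≤ (1+1/(b-2*α-1)) * (κ₀^(-(2*α)) * (n:ℝ)^(-(2*α))) :=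
            mul_le_mul_of_nonneg_left ht2b hpos2
        _ = ((1+1/(b-2*α-1)) * κ₀^(-(2*α))) * (n:ℝ)^(-(2*α)) := by ring
    have htail2 : κ₀^(1-b)/(b-1) * (n:ℝ)^(1-b) ≤ κ₀^(1-b)/(b-1) * (n:ℝ)^(-(2*α)) := by
      apply mul_le_mul_of_nonneg_left _ (by positivity)
      exact Real.rpow_le_rpow_of_exponent_le hn1R (by linarith)
    have h10 : ((1+1/(b-2*α-1)) * κ₀^(-(2*α)))
        ≤ max 1 ((1+1/(b-2*α-1)) * κ₀^(-(2*α))) := le_max_right _ _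
    have h11 := mul_le_mul_of_nonneg_right h10 hnb2
    rw [hCA2def]
    have hexp : (max 1 ((1+1/(b-2*α-1)) * κ₀^(-(2*α))) + κ₀^(1-b)/(b-1)) * (n:ℝ)^(-(2*α))
        = (max 1 ((1+1/(b-2*α-1)) * κ₀^(-(2*α)))) * (n:ℝ)^(-(2*α))
          + κ₀^(1-b)/(b-1) * (n:ℝ)^(-(2*α)) := by ring
    rw [hexp]
    linarith [hsumU, hheadb2, htail_bound, htail2, h11]
  exact ⟨⟨hW0, hδ1W⟩, hconc1, hconc2, hsplit, hAle, hBle, hlow1, hlow2, hup1, hup2⟩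

theorem masked_surrogate_scaling_law
    (α b K : ℝ) (hα : 1 < α) (hb : 1 < b) (hbne : b ≠ 2 * α + 1) (hK : 0 < K)
    (τ : ℕ → ℝ) (hτpos : ∀ n : ℕ, 1 ≤ n → 0 < τ n)
    (hτ : ∀ n : ℕ, 1 ≤ n → ∑' i : ℕ+, 1 / (1 + τ n * (i : ℝ) ^ α) = (n : ℝ))
    (ζ : ℕ → ℕ+ → ℝ)
    (hζ : ∀ (n : ℕ) (i : ℕ+), ζ n i = τ n * (i : ℝ) ^ α / (1 + τ n * (i : ℝ) ^ α))
    (Ω : ℕ → ℝ)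
    (hΩ : ∀ n : ℕ, 1 ≤ n → Ω n = (1 / (n : ℝ)) * ∑' i : ℕ+, (1 - ζ n i) ^ 2)
    (σsq : ℕ → ℝ) (hσ : ∀ n, 0 ≤ σsq n)
    (Rmask : ℕ → ℝ)
    (hRmask : ∀ n : ℕ, Rmask n =
      (σsq n * Ω n
          + ∑' i : ℕ+, (if ζ n i ^ 2 < 1 - Ω n then (i : ℝ) ^ (-b) * ζ n i ^ 2 else 0))
        / (1 - Ω n)
      + ∑' i : ℕ+, (if ζ n i ^ 2 < 1 - Ω n then 0 else (i : ℝ) ^ (-b))) :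
    (b < 2 * α + 1 →
      (∀ n : ℕ, 1 ≤ n → σsq n ≤ K * (n : ℝ) ^ (-(b - 1))) →
      ∃ c C : ℝ, 0 < c ∧ 0 < C ∧ ∃ N : ℕ, ∀ n : ℕ, N ≤ n →
        c * (n : ℝ) ^ (-(b - 1)) ≤ Rmask n ∧ Rmask n ≤ C * (n : ℝ) ^ (-(b - 1))) ∧
    (2 * α + 1 < b →
      (∀ n : ℕ, 1 ≤ n → σsq n ≤ K * (n : ℝ) ^ (-(2 * α))) →
      ∃ c C : ℝ, 0 < c ∧ 0 < C ∧ ∃ N : ℕ, ∀ n : ℕ, N ≤ n →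
        c * (n : ℝ) ^ (-(2 * α)) ≤ Rmask n ∧ Rmask n ≤ C * (n : ℝ) ^ (-(2 * α))) := by
  obtain ⟨N, δ, cl, cl', CB, CA1, CA2, hδ, hcl, hcl', hCB, hCA1, hCA2, hN1, hcore⟩ :=
    core α b hα hb
  constructor
  · -- case b < 2α+1
    intro hcase hσbound
    refine ⟨cl, (K + CA1)/δ + CB,  hcl, ?_, N, ?_⟩
    · have h1 : 0 < (K + CA1)/δ := div_pos (by linarith) hδ
      linarith
    intro n hNn
    have hn1 : 1 ≤ n := le_trans hN1 hNn
    have hn0R : (0:ℝ) < n := by exact_mod_cast Nat.lt_of_lt_of_le Nat.zero_lt_one hn1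
    have hn1R : (1:ℝ) ≤ n := by exact_mod_cast hn1
    obtain ⟨⟨hW0, hδW⟩, hA0, hB0, hsplit, hAle, hBle, hlow1, hlow2, hup1, hup2⟩ :=
      hcore n hNn (τ n) (hτpos n hn1) (hτ n hn1) (ζ n) (hζ n) (Ω n) (hΩ n hn1)
    have hee : (n:ℝ)^(-(b-1)) = (n:ℝ)^(1-b) := by
      rw [show (-(b-1) : ℝ) = 1-b by ring]
    rw [hee, hRmask n]
    have hpos1W : 0 < 1 - Ω n := lt_of_lt_of_le hδ hδW
    have h1W1 : 1 - Ω n ≤ 1 := by linarith [hW0]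
    have hσΩ : 0 ≤ σsq n * Ω n := mul_nonneg (hσ n) hW0
    constructor
    · -- lower bound
      have h1 : (∑' i : ℕ+, (if ζ n i ^ 2 < 1 - Ω n then (i : ℝ) ^ (-b) * ζ n i ^ 2 else 0))
          ≤ (σsq n * Ω n
              + ∑' i : ℕ+, (if ζ n i ^ 2 < 1 - Ω n then (i : ℝ) ^ (-b) * ζ n i ^ 2 else 0))
            / (1 - Ω n) := by
        rw [le_div_iff₀ hpos1W]
        have h2 := mul_le_of_le_one_right hA0 h1W1
        linarith
      calc cl * (n:ℝ)^(1-b)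
          ≤ ∑' i : ℕ+, (i:ℝ)^(-b) * ζ n i^2 := hlow1
        _ ≤ (∑' i : ℕ+, (if ζ n i ^ 2 < 1 - Ω n then (i : ℝ) ^ (-b) * ζ n i ^ 2 else 0))
            + ∑' i : ℕ+, (if ζ n i ^ 2 < 1 - Ω n then 0 else (i : ℝ) ^ (-b)) := hsplit
        _ ≤ (σsq n * Ω n
              + ∑' i : ℕ+, (if ζ n i ^ 2 < 1 - Ω n then (i : ℝ) ^ (-b) * ζ n i ^ 2 else 0))
            / (1 - Ω n)
            + ∑' i : ℕ+, (if ζ n i ^ 2 < 1 - Ω n then 0 else (i : ℝ) ^ (-b)) := by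
          linarith [h1]
    · -- upper bound
      have hσb : σsq n ≤ K * (n:ℝ)^(1-b) := by
        have := hσbound n hn1
        rwa [hee] at this
      have hA' : ∑' i : ℕ+, (i:ℝ)^(-b) * ζ n i^2 ≤ CA1 * (n:ℝ)^(1-b) := hup1 hcase
      have hΩ1 : Ω n ≤ 1 := by linarith
      have hnum : σsq n * Ω n
            + (∑' i : ℕ+, (if ζ n i ^ 2 < 1 - Ω n then (i : ℝ) ^ (-b) * ζ n i ^ 2 else 0))
          ≤ (K + CA1) * (n:ℝ)^(1-b) := by
        have h3 : σsq n * Ω n ≤ σsq n := mul_le_of_le_one_right (hσ n) hΩ1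
        have h4 := le_trans hAle hA'
        have h5 : (K + CA1) * (n:ℝ)^(1-b) = K * (n:ℝ)^(1-b) + CA1 * (n:ℝ)^(1-b) := by
          ring
        rw [h5]
        linarith
      have hdiv : (σsq n * Ω n
            + (∑' i : ℕ+, (if ζ n i ^ 2 < 1 - Ω n then (i : ℝ) ^ (-b) * ζ n i ^ 2 else 0)))
            / (1 - Ω n)
          ≤ ((K + CA1) * (n:ℝ)^(1-b)) / δ := by
        apply div_le_div₀ (by positivity) hnum hδ hδW
      calc (σsq n * Ω n
              + ∑' i : ℕ+, (if ζ n i ^ 2 < 1 - Ω n then (i : ℝ) ^ (-b) * ζ n i ^ 2 else 0))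
            / (1 - Ω n)
            + ∑' i : ℕ+, (if ζ n i ^ 2 < 1 - Ω n then 0 else (i : ℝ) ^ (-b))
          ≤ ((K + CA1) * (n:ℝ)^(1-b)) / δ + CB * (n:ℝ)^(1-b) := by
            linarith [hdiv, hBle]
        _ = ((K + CA1)/δ + CB) * (n:ℝ)^(1-b) := by ring
  · -- case 2α+1 < b
    intro hcase hσbound
    refine ⟨cl', (K + CA2)/δ + CB, hcl', ?_, N, ?_⟩
    · have h1 : 0 < (K + CA2)/δ := div_pos (by linarith) hδ
      linarith
    intro n hNn
    have hn1 : 1 ≤ n := le_trans hN1 hNn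
    have hn0R : (0:ℝ) < n := by exact_mod_cast Nat.lt_of_lt_of_le Nat.zero_lt_one hn1
    have hn1R : (1:ℝ) ≤ n := by exact_mod_cast hn1
    obtain ⟨⟨hW0, hδW⟩, hA0, hB0, hsplit, hAle, hBle, hlow1, hlow2, hup1, hup2⟩ :=
      hcore n hNn (τ n) (hτpos n hn1) (hτ n hn1) (ζ n) (hζ n) (Ω n) (hΩ n hn1)
    rw [hRmask n]
    have hpos1W : 0 < 1 - Ω n := lt_of_lt_of_le hδ hδW
    have h1W1 : 1 - Ω n ≤ 1 := by linarith [hW0]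
    have hσΩ : 0 ≤ σsq n * Ω n := mul_nonneg (hσ n) hW0
    have hBle2 : ∑' i : ℕ+, (if ζ n i ^ 2 < 1 - Ω n then 0 else (i : ℝ) ^ (-b))
        ≤ CB * (n:ℝ)^(-(2*α)) := by
      refine le_trans hBle ?_
      apply mul_le_mul_of_nonneg_left _ (le_of_lt hCB)
      exact Real.rpow_le_rpow_of_exponent_le hn1R (by linarith)
    constructor
    · -- lower bound
      have h1 : (∑' i : ℕ+, (if ζ n i ^ 2 < 1 - Ω n then (i : ℝ) ^ (-b) * ζ n i ^ 2 else 0))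
          ≤ (σsq n * Ω n
              + ∑' i : ℕ+, (if ζ n i ^ 2 < 1 - Ω n then (i : ℝ) ^ (-b) * ζ n i ^ 2 else 0))
            / (1 - Ω n) := by
        rw [le_div_iff₀ hpos1W]
        have h2 := mul_le_of_le_one_right hA0 h1W1
        linarith
      calc cl' * (n:ℝ)^(-(2*α))
          ≤ ∑' i : ℕ+, (i:ℝ)^(-b) * ζ n i^2 := hlow2
        _ ≤ (∑' i : ℕ+, (if ζ n i ^ 2 < 1 - Ω n then (i : ℝ) ^ (-b) * ζ n i ^ 2 else 0))
            + ∑' i : ℕ+, (if ζ n i ^ 2 < 1 - Ω n then 0 else (i : ℝ) ^ (-b)) := hsplit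
        _ ≤ (σsq n * Ω n
              + ∑' i : ℕ+, (if ζ n i ^ 2 < 1 - Ω n then (i : ℝ) ^ (-b) * ζ n i ^ 2 else 0))
            / (1 - Ω n)
            + ∑' i : ℕ+, (if ζ n i ^ 2 < 1 - Ω n then 0 else (i : ℝ) ^ (-b)) := by
          linarith [h1]
    · -- upper bound
      have hσb : σsq n ≤ K * (n:ℝ)^(-(2*α)) := hσbound n hn1
      have hA' : ∑' i : ℕ+, (i:ℝ)^(-b) * ζ n i^2 ≤ CA2 * (n:ℝ)^(-(2*α)) := hup2 hcase
      have hΩ1 : Ω n ≤ 1 := by linarith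
      have hnum : σsq n * Ω n
            + (∑' i : ℕ+, (if ζ n i ^ 2 < 1 - Ω n then (i : ℝ) ^ (-b) * ζ n i ^ 2 else 0))
          ≤ (K + CA2) * (n:ℝ)^(-(2*α)) := by
        have h3 : σsq n * Ω n ≤ σsq n := mul_le_of_le_one_right (hσ n) hΩ1
        have h4 := le_trans hAle hA'
        have h5 : (K + CA2) * (n:ℝ)^(-(2*α))
            = K * (n:ℝ)^(-(2*α)) + CA2 * (n:ℝ)^(-(2*α)) := by ring
        rw [h5]
        linarith
      have hdiv : (σsq n * Ω n
            + (∑' i : ℕ+, (if ζ n i ^ 2 < 1 - Ω n then (i : ℝ) ^ (-b) * ζ n i ^ 2 else 0)))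
            / (1 - Ω n)
          ≤ ((K + CA2) * (n:ℝ)^(-(2*α))) / δ := by
        apply div_le_div₀ (by positivity) hnum hδ hδW
      calc (σsq n * Ω n
              + ∑' i : ℕ+, (if ζ n i ^ 2 < 1 - Ω n then (i : ℝ) ^ (-b) * ζ n i ^ 2 else 0))
            / (1 - Ω n)
            + ∑' i : ℕ+, (if ζ n i ^ 2 < 1 - Ω n then 0 else (i : ℝ) ^ (-b))
          ≤ ((K + CA2) * (n:ℝ)^(-(2*α))) / δ + CB * (n:ℝ)^(-(2*α)) := by
            linarith [hdiv, hBle2]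
        _ = ((K + CA2)/δ + CB) * (n:ℝ)^(-(2*α)) := by ring
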